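/- Let B be the ball algebra on the closed unit ball of ℂ^d. Every closed homogeneous ideal J ⊆ B is finitely generated as a closed ideal: there exists a finite set F ⊆ J such that J equals the closure in B of the (algebraic) ideal of B generated by F. -/

import Mathlib

open MvPolynomial Metric

noncomputable section

abbrev Cd (d : ℕ) := EuclideanSpace ℂ (Fin d)

abbrev CBall (d : ℕ) : Set (Cd d) := Metric.closedBall (0 : Cd d) 1

instance (d : ℕ) : CompactSpace (CBall d) :=
  isCompact_iff_compactSpace.mp (isCompact_closedBall _ _)

/-- The `i`-th coordinate function on the closed unit ball. -/
def coordFn (d : ℕ) (i : Fin d) : C(CBall d, ℂ) :=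
  ⟨fun z => (z : Cd d) i, by first | fun_prop | exact (continuous_apply i).comp ((PiLp.continuous_ofLp 2 _).comp continuous_subtype_val) | continuity⟩

/-- Restriction of a polynomial to the closed unit ball, as an element of
`C(closedBall, ℂ)`. -/
def polyMap (d : ℕ) : MvPolynomial (Fin d) ℂ →ₐ[ℂ] C(CBall d, ℂ) :=
  aeval (coordFn d)

/-- The ball algebra: the closure, in the Banach algebra of continuous functions on
the closed unit ball of ℂ^d with the supremum norm, of the restrictions of
polynomials. -/
def ballAlg (d : ℕ) : Set C(CBall d, ℂ) := closure (Set.range (polyMap d))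

/-- `J` is an ideal of the ball algebra `B`. -/
def IsIdealOfBallAlg (d : ℕ) (J : Set C(CBall d, ℂ)) : Prop :=
  J ⊆ ballAlg d ∧ (0 : C(CBall d, ℂ)) ∈ J ∧
    (∀ f ∈ J, ∀ g ∈ J, f + g ∈ J) ∧ (∀ f ∈ J, ∀ g ∈ ballAlg d, g * f ∈ J)

/-- The self-map of the closed ball given by `z ↦ t z` for `‖t‖ ≤ 1`. -/
def dilatePt (d : ℕ) (t : ℂ) (ht : ‖t‖ ≤ 1) : C(CBall d, CBall d) :=
  ⟨fun z => ⟨t • (z : Cd d), by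
      have hz : ‖(z : Cd d)‖ ≤ 1 := mem_closedBall_zero_iff.mp z.2
      show t • (z : Cd d) ∈ Metric.closedBall 0 1
      rw [mem_closedBall_zero_iff, norm_smul]
      exact mul_le_one₀ ht (norm_nonneg _) hz⟩,
    by exact Continuous.subtype_mk (continuous_subtype_val.const_smul t) _⟩

/-- The dilation `f ↦ (z ↦ f (t z))` on continuous functions on the closed ball. -/
def dilateFn (d : ℕ) (t : ℂ) (ht : ‖t‖ ≤ 1) (f : C(CBall d, ℂ)) : C(CBall d, ℂ) :=
  f.comp (dilatePt d t ht)

/-- A closed ideal of the ball algebra is homogeneous if it is invariant under all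
dilations `z ↦ t z`, `|t| < 1`. -/
def IsHomogBallIdeal (d : ℕ) (J : Set C(CBall d, ℂ)) : Prop :=
  ∀ f ∈ J, ∀ t : ℂ, ∀ ht : ‖t‖ < 1, dilateFn d t ht.le f ∈ J

-- ### auxiliary development

namespace Stmt16Aux

variable (d : ℕ)

/-- unit disc subtype -/
abbrev UD := {t : ℂ // ‖t‖ ≤ 1}

lemma dilateFn_sub (t : ℂ) (ht : ‖t‖ ≤ 1) (f g : C(CBall d, ℂ)) :
    dilateFn d t ht (f - g) = dilateFn d t ht f - dilateFn d t ht g := by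
  ext z; simp [dilateFn]

lemma norm_dilateFn_le (t : ℂ) (ht : ‖t‖ ≤ 1) (f : C(CBall d, ℂ)) :
    ‖dilateFn d t ht f‖ ≤ ‖f‖ := by
  refine ContinuousMap.norm_le _ (norm_nonneg f) |>.mpr fun z => ?_
  exact f.norm_coe_le_norm _

def dilCM (f : C(CBall d, ℂ)) : C(UD × CBall d, ℂ) :=
  ⟨fun p => f (dilatePt d p.1.1 p.1.2 p.2), by
    refine f.continuous.comp ?_
    refine Continuous.subtype_mk ?_ _
    exact (continuous_subtype_val.comp continuous_fst).smul
      (continuous_subtype_val.comp continuous_snd)⟩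

def dilC (f : C(CBall d, ℂ)) : C(UD, C(CBall d, ℂ)) := (dilCM d f).curry

lemma dilC_apply (f : C(CBall d, ℂ)) (t : ℂ) (ht : ‖t‖ ≤ 1) :
    dilC d f ⟨t, ht⟩ = dilateFn d t ht f := rfl

lemma dilateFn_one (f : C(CBall d, ℂ)) : dilateFn d 1 norm_one.le f = f := by
  ext z; simp [dilateFn, dilatePt]


lemma tendsto_dilateFn {Y : Type*} {l : Filter Y} {u : Y → UD} {t : UD}
    (hu : Filter.Tendsto u l (nhds t)) (f : C(CBall d, ℂ)) :
    Filter.Tendsto (fun y => dilC d f (u y)) l (nhds (dilC d f t)) :=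
  ((dilC d f).continuous.tendsto t).comp hu

/-- For a closed set `A` invariant under open dilations of `f`, also boundary dilations
of `f` lie in it. -/
lemma dilate_mem_of_closed' {A : Set C(CBall d, ℂ)} (hJcl : IsClosed A)
    {f : C(CBall d, ℂ)} (hJhom : ∀ s : ℂ, ∀ hs : ‖s‖ < 1, dilateFn d s hs.le f ∈ A)
    (t : ℂ) (ht : ‖t‖ ≤ 1) : dilateFn d t ht f ∈ A := by
  have key : Filter.Tendsto (fun n : ℕ => (⟨(n / (n+1) : ℝ) • t, by
      rw [norm_smul]
      refine mul_le_one₀ ?_ (norm_nonneg _) ht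
      rw [Real.norm_eq_abs, abs_of_nonneg (by positivity)]
      rw [div_le_one (by positivity)]; linarith⟩ : UD))
      Filter.atTop (nhds ⟨t, ht⟩) := by
    rw [tendsto_subtype_rng]
    have h1 : Filter.Tendsto (fun n : ℕ => (n / (n+1) : ℝ)) Filter.atTop (nhds 1) :=
      tendsto_natCast_div_add_atTop (1:ℝ)
    have := (h1.smul_const t)
    simpa using this
  have := (tendsto_dilateFn d key f)
  refine hJcl.mem_of_tendsto this (Filter.Eventually.of_forall fun n => ?_)
  rw [dilC_apply]
  refine hJhom _ ?_
  rw [norm_smul, Real.norm_eq_abs, abs_of_nonneg (by positivity)]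
  calc (n / (n+1) : ℝ) * ‖t‖ ≤ (n / (n+1) : ℝ) * 1 :=
        mul_le_mul_of_nonneg_left ht (by positivity)
    _ < 1 := by rw [mul_one, div_lt_one (by positivity)]; linarith


/-- the ball algebra as a subalgebra -/
def BA : Subalgebra ℂ C(CBall d, ℂ) := (polyMap d).range.topologicalClosure

lemma ballAlg_eq : ballAlg d = (BA d : Set C(CBall d, ℂ)) := rfl

lemma polyMap_mem_ballAlg (p : MvPolynomial (Fin d) ℂ) : polyMap d p ∈ ballAlg d :=
  subset_closure ⟨p, rfl⟩

lemma const_mul_eq_smul (c : ℂ) (f : C(CBall d, ℂ)) :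
    (algebraMap ℂ C(CBall d, ℂ) c) * f = c • f := by
  ext z; simp [Algebra.smul_def]

lemma smul_mem_J {J : Set C(CBall d, ℂ)} (hJ : IsIdealOfBallAlg d J)
    {f : C(CBall d, ℂ)} (hf : f ∈ J) (c : ℂ) : c • f ∈ J := by
  rw [← const_mul_eq_smul]
  exact hJ.2.2.2 f hf _ ((BA d).algebraMap_mem c)

lemma convex_J {J : Set C(CBall d, ℂ)} (hJ : IsIdealOfBallAlg d J) : Convex ℝ J := by
  intro f hf g hg a b ha hb hab
  have h1 : ∀ (r : ℝ) (u : C(CBall d, ℂ)), r • u = ((r : ℂ)) • u := fun r u =>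
    (algebraMap_smul ℂ r u).symm
  rw [h1 a f, h1 b g]
  exact hJ.2.2.1 _ (smul_mem_J d hJ hf _) _ (smul_mem_J d hJ hg _)


lemma dilate_mem_of_closed {J : Set C(CBall d, ℂ)} (hJcl : IsClosed J)
    (hJhom : IsHomogBallIdeal d J) {f : C(CBall d, ℂ)} (hf : f ∈ J)
    (t : ℂ) (ht : ‖t‖ ≤ 1) : dilateFn d t ht f ∈ J :=
  dilate_mem_of_closed' d hJcl (fun s hs => hJhom f hf s hs) t ht

open MeasureTheory in

def rotC (θ : ℝ) : UD :=
  ⟨Complex.exp (θ * Complex.I), by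
    rw [Complex.norm_exp_ofReal_mul_I]⟩

def fourInt (k : ℕ) (f : C(CBall d, ℂ)) (θ : ℝ) : C(CBall d, ℂ) :=
  Complex.exp (-(k : ℂ) * θ * Complex.I) • dilC d f (rotC θ)

lemma cont_fourInt (k : ℕ) (f : C(CBall d, ℂ)) : Continuous (fourInt d k f) := by
  show Continuous (fun θ : ℝ => Complex.exp (-(k : ℂ) * θ * Complex.I) • dilC d f (rotC θ))
  refine Continuous.smul (?_ : Continuous fun θ : ℝ => Complex.exp (-(k : ℂ) * θ * Complex.I))
    (?_ : Continuous fun θ : ℝ => dilC d f (rotC θ))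
  · exact Complex.continuous_exp.comp (by fun_prop)
  · exact (dilC d f).continuous.comp
      (Continuous.subtype_mk (Complex.continuous_exp.comp (by fun_prop)) _)

lemma norm_fourInt_le (k : ℕ) (f : C(CBall d, ℂ)) (θ : ℝ) :
    ‖fourInt d k f θ‖ ≤ ‖f‖ := by
  rw [fourInt, norm_smul]
  have h1 : ‖Complex.exp (-(k : ℂ) * θ * Complex.I)‖ = 1 := by
    have : (-(k : ℂ) * θ * Complex.I) = ((-(k * θ) : ℝ) : ℂ) * Complex.I := by
      push_cast; ring
    rw [this, Complex.norm_exp_ofReal_mul_I]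
  rw [h1, one_mul, dilC_apply]
  exact norm_dilateFn_le d _ _ f

open MeasureTheory in
/-- the k-th Fourier coefficient operator -/
def four (k : ℕ) (f : C(CBall d, ℂ)) : C(CBall d, ℂ) :=
  ⨍ θ in Set.Ioc 0 (2*Real.pi), fourInt d k f θ

open MeasureTheory in
lemma four_mem_J {J : Set C(CBall d, ℂ)} (hJ : IsIdealOfBallAlg d J) (hJcl : IsClosed J)
    (hJhom : IsHomogBallIdeal d J) {f : C(CBall d, ℂ)} (hf : f ∈ J) (k : ℕ) :
    four d k f ∈ J := by
  refine (convex_J d hJ).set_average_mem hJcl ?_ ?_ ?_ ?_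
  · simp [Real.volume_Ioc, Real.pi_pos]
  · simp [Real.volume_Ioc, ENNReal.mul_eq_top]
  · refine Filter.Eventually.of_forall fun θ => ?_
    rw [fourInt, dilC_apply]
    exact smul_mem_J d hJ (dilate_mem_of_closed d hJcl hJhom hf _ _) _
  · exact (cont_fourInt d k f).integrableOn_Ioc

open MeasureTheory in
lemma four_sub (k : ℕ) (f g : C(CBall d, ℂ)) :
    four d k (f - g) = four d k f - four d k g := by
  unfold four
  rw [setAverage_eq, setAverage_eq, setAverage_eq, ← smul_sub]
  congr 1
  rw [← integral_sub ((cont_fourInt d k f).integrableOn_Ioc)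
    ((cont_fourInt d k g).integrableOn_Ioc)]
  refine setIntegral_congr_fun measurableSet_Ioc fun θ _ => ?_
  show fourInt d k (f - g) θ = _
  unfold fourInt
  rw [← smul_sub]
  congr 1

open MeasureTheory in
lemma norm_four_le (k : ℕ) (f : C(CBall d, ℂ)) : ‖four d k f‖ ≤ ‖f‖ := by
  unfold four
  rw [setAverage_eq, norm_smul]
  have h2 : ‖∫ θ in Set.Ioc 0 (2*Real.pi), fourInt d k f θ‖ ≤
      ‖f‖ * (volume (Set.Ioc (0:ℝ) (2*Real.pi))).toReal := by
    exact norm_setIntegral_le_of_norm_le_const (by simp [Real.volume_Ioc, ENNReal.mul_lt_top])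
      (fun θ _ => norm_fourInt_le d k f θ)
  have h3 : (volume (Set.Ioc (0:ℝ) (2*Real.pi))).toReal = 2*Real.pi := by
    simp [Real.volume_Ioc]
    exact Real.pi_nonneg
  rw [h3] at h2; rw [measureReal_def, h3]
  have hπ : (0:ℝ) < 2*Real.pi := by positivity
  have h4 : ‖(2*Real.pi)⁻¹‖ = (2*Real.pi)⁻¹ := by
    rw [Real.norm_eq_abs, abs_of_pos (by positivity)]
  calc ‖(2*Real.pi)⁻¹‖ * ‖∫ θ in Set.Ioc 0 (2*Real.pi), fourInt d k f θ‖
      ≤ (2*Real.pi)⁻¹ * (‖f‖ * (2*Real.pi)) := by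
        rw [h4]
        exact mul_le_mul_of_nonneg_left h2 (by positivity)
    _ = ‖f‖ := by field_simp


lemma eval_smul_homog {q : MvPolynomial (Fin d) ℂ} {n : ℕ} (hq : q.IsHomogeneous n)
    (t : ℂ) (x : Fin d → ℂ) :
    eval (fun i => t * x i) q = t ^ n * eval x q := by
  rw [eval_eq, eval_eq, Finset.mul_sum]
  refine Finset.sum_congr rfl fun s hs => ?_
  have hdeg : s.degree = n := by
    by_contra h
    exact (mem_support_iff.mp hs) (hq.coeff_eq_zero h)
  have : ∏ i ∈ s.support, (t * x i) ^ s i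
      = t ^ n * ∏ i ∈ s.support, x i ^ s i := by
    rw [← hdeg, Finsupp.degree_apply]
    rw [← Finset.prod_pow_eq_pow_sum]
    rw [← Finset.prod_mul_distrib]
    exact Finset.prod_congr rfl fun i _ => mul_pow t (x i) (s i)
  rw [this]; ring

lemma polyMap_apply (p : MvPolynomial (Fin d) ℂ) (z : CBall d) :
    polyMap d p z = eval (fun i => (z : Cd d) i) p := by
  have h := MvPolynomial.comp_aeval (f := coordFn d)
    (φ := ContinuousMap.evalAlgHom ℂ ℂ z)
  have h2 : (ContinuousMap.evalAlgHom ℂ ℂ z) (polyMap d p)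
      = aeval (fun i => (coordFn d i) z) p := by
    show ((ContinuousMap.evalAlgHom ℂ ℂ z).comp (aeval (coordFn d))) p = _
    rw [h]; rfl
  have h3 : aeval (fun i => (coordFn d i) z) p = eval (fun i => (coordFn d i) z) p := by
    rw [← coe_aeval_eq_eval]; rfl
  exact h2.trans h3

lemma dilateFn_polyMap (t : ℂ) (ht : ‖t‖ ≤ 1) (p : MvPolynomial (Fin d) ℂ) :
    dilateFn d t ht (polyMap d p)
      = ∑ m ∈ Finset.range (p.totalDegree + 1),
          t ^ m • polyMap d (homogeneousComponent m p) := by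
  ext z
  rw [ContinuousMap.sum_apply]
  show polyMap d p (dilatePt d t ht z) = _
  rw [polyMap_apply]
  have hc : ∀ i : Fin d, ((dilatePt d t ht z : Cd d)) i = t * (z : Cd d) i := by
    intro i
    show (t • (z : Cd d)) i = _
    simp
  rw [show (fun i => ((dilatePt d t ht z : Cd d)) i) = (fun i => t * (z : Cd d) i)
    from funext hc]
  conv_lhs => rw [← p.sum_homogeneousComponent]
  rw [map_sum]
  refine Finset.sum_congr rfl fun m _ => ?_
  rw [eval_smul_homog d (homogeneousComponent_isHomogeneous m p) t]
  rw [ContinuousMap.smul_apply, polyMap_apply]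
  simp


open MeasureTheory intervalIntegral in
lemma four_polyMap (k : ℕ) (p : MvPolynomial (Fin d) ℂ) :
    four d k (polyMap d p) = polyMap d (homogeneousComponent k p) := by
  have hπ : (0:ℝ) < 2*Real.pi := by positivity
  set N := p.totalDegree with hN
  -- integrand identity
  have hint : ∀ θ : ℝ, fourInt d k (polyMap d p) θ
      = ∑ m ∈ Finset.range (N+1),
          Complex.exp ((((m:ℂ) - k) * Complex.I) * θ) • polyMap d (homogeneousComponent m p) := by
    intro θ
    rw [fourInt, dilC_apply, dilateFn_polyMap, Finset.smul_sum]
    refine Finset.sum_congr rfl fun m _ => ?_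
    rw [smul_smul]
    congr 1
    show Complex.exp (-(k:ℂ) * θ * Complex.I) * (Complex.exp ((θ:ℂ) * Complex.I)) ^ m = _
    rw [← Complex.exp_nat_mul, ← Complex.exp_add]
    congr 1
    push_cast
    ring
  -- value of each elementary integral
  have hterm : ∀ m ∈ Finset.range (N+1),
      (∫ θ in (0:ℝ)..(2*Real.pi),
        Complex.exp ((((m:ℂ) - k) * Complex.I) * θ) • polyMap d (homogeneousComponent m p))
      = (if m = k then (2*Real.pi:ℝ) • polyMap d (homogeneousComponent m p) else 0) := by
    intro m _
    rw [intervalIntegral.integral_smul_const]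
    by_cases hmk : m = k
    · subst hmk
      simp only [if_pos rfl]
      have : ∀ θ:ℝ, Complex.exp ((((m:ℂ) - m) * Complex.I) * θ) = 1 := by
        intro θ; simp
      rw [intervalIntegral.integral_congr (g := fun _ => (1:ℂ)) (fun θ _ => this θ)]
      rw [intervalIntegral.integral_const]
      rw [sub_zero, smul_assoc]
      norm_num
    · rw [if_neg hmk]
      have hc : (((m:ℂ) - k) * Complex.I) ≠ 0 := by
        simp only [ne_eq, mul_eq_zero, Complex.I_ne_zero, or_false, sub_eq_zero]
        exact_mod_cast fun h => hmk (Nat.cast_injective h)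
      rw [integral_exp_mul_complex hc]
      have h2 : Complex.exp ((((m:ℂ) - k) * Complex.I) * (((2*Real.pi : ℝ)):ℂ))
          = 1 := by
        have he : (((m:ℂ) - k) * Complex.I) * (((2*Real.pi : ℝ)):ℂ)
            = ((((m:ℤ) - (k:ℤ)) : ℤ) : ℂ) * (2 * (Real.pi:ℂ) * Complex.I) := by
          push_cast; ring
        rw [he, Complex.exp_int_mul_two_pi_mul_I]
      rw [h2]
      simp
  have hsum : (∫ θ in (0:ℝ)..(2*Real.pi), fourInt d k (polyMap d p) θ)
      = (if k ∈ Finset.range (N+1) then (2*Real.pi:ℝ) • polyMap d (homogeneousComponent k p)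
          else 0) := by
    rw [intervalIntegral.integral_congr (fun θ _ => hint θ)]
    rw [intervalIntegral.integral_finset_sum (fun m _ => by
      apply Continuous.intervalIntegrable
      exact (Complex.continuous_exp.comp (by fun_prop)).smul continuous_const)]
    rw [Finset.sum_congr rfl hterm]
    simp [Finset.sum_ite_eq']
  have haux : (if k ∈ Finset.range (N+1) then (2*Real.pi:ℝ) • polyMap d (homogeneousComponent k p)
          else 0) = (2*Real.pi:ℝ) • polyMap d (homogeneousComponent k p) := by
    by_cases hk : k ∈ Finset.range (N+1)
    · rw [if_pos hk]
    · rw [if_neg hk]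
      have : homogeneousComponent k p = 0 := by
        apply homogeneousComponent_eq_zero
        simp only [Finset.mem_range, not_lt] at hk
        omega
      rw [this, map_zero, smul_zero]
  rw [four, setAverage_eq, ← intervalIntegral.integral_of_le hπ.le, hsum, haux]
  rw [measureReal_def, Real.volume_Ioc, sub_zero, ENNReal.toReal_ofReal hπ.le, smul_smul]
  rw [inv_mul_cancel₀ (ne_of_gt hπ), one_smul]


def Wmod (k : ℕ) : Submodule ℂ C(CBall d, ℂ) :=
  (restrictTotalDegree (Fin d) ℂ k).map (polyMap d).toLinearMap

lemma isClosed_Wmod (k : ℕ) : IsClosed (Wmod d k : Set C(CBall d, ℂ)) := by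
  have h1 : FiniteDimensional ℂ (restrictTotalDegree (Fin d) ℂ k) := inferInstance
  have h2 : FiniteDimensional ℂ (Wmod d k) := Module.Finite.map _ _
  exact Submodule.closed_of_finiteDimensional _

lemma four_mem_Wmod {f : C(CBall d, ℂ)} (hf : f ∈ ballAlg d) (k : ℕ) :
    four d k f ∈ Wmod d k := by
  have hcl := isClosed_Wmod d k
  have : four d k f ∈ closure (Wmod d k : Set C(CBall d, ℂ)) := by
    rw [Metric.mem_closure_iff]
    intro ε hε
    obtain ⟨b, hb, hdist⟩ := Metric.mem_closure_iff.mp hf ε hε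
    obtain ⟨p, rfl⟩ := hb
    refine ⟨polyMap d (homogeneousComponent k p), ?_, ?_⟩
    · exact ⟨homogeneousComponent k p,
        (mem_restrictTotalDegree _ _ _).mpr (homogeneousComponent_isHomogeneous k p).totalDegree_le,
        rfl⟩
    · rw [← four_polyMap]
      rw [dist_eq_norm, ← four_sub]
      calc ‖four d k (f - polyMap d p)‖ ≤ ‖f - polyMap d p‖ := norm_four_le d k _
        _ < ε := by rwa [← dist_eq_norm]
  rwa [hcl.closure_eq] at this


def genSet (F : Finset C(CBall d, ℂ)) : Set C(CBall d, ℂ) :=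
  {h : C(CBall d, ℂ) |
    ∃ (n : ℕ) (g q : Fin n → C(CBall d, ℂ)),
      (∀ i, g i ∈ ballAlg d) ∧ (∀ i, q i ∈ (F : Set C(CBall d, ℂ))) ∧
      h = ∑ i, g i * q i}

lemma zero_mem_genSet (F : Finset C(CBall d, ℂ)) : 0 ∈ genSet d F :=
  ⟨0, Fin.elim0, Fin.elim0, fun i => i.elim0, fun i => i.elim0, by simp⟩

lemma add_mem_genSet (F : Finset C(CBall d, ℂ)) {a b : C(CBall d, ℂ)}
    (ha : a ∈ genSet d F) (hb : b ∈ genSet d F) : a + b ∈ genSet d F := by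
  obtain ⟨n1, g1, q1, hg1, hq1, rfl⟩ := ha
  obtain ⟨n2, g2, q2, hg2, hq2, rfl⟩ := hb
  refine ⟨n1 + n2, Fin.append g1 g2, Fin.append q1 q2, ?_, ?_, ?_⟩
  · intro i
    refine Fin.addCases (fun j => ?_) (fun j => ?_) i
    · rw [Fin.append_left]; exact hg1 j
    · rw [Fin.append_right]; exact hg2 j
  · intro i
    refine Fin.addCases (fun j => ?_) (fun j => ?_) i
    · rw [Fin.append_left]; exact hq1 j
    · rw [Fin.append_right]; exact hq2 j
  · rw [Fin.sum_univ_add]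
    congr 1
    · refine Finset.sum_congr rfl fun j _ => ?_
      rw [Fin.append_left, Fin.append_left]
    · refine Finset.sum_congr rfl fun j _ => ?_
      rw [Fin.append_right, Fin.append_right]

lemma smul_mem_genSet (F : Finset C(CBall d, ℂ)) (c : ℂ) {a : C(CBall d, ℂ)}
    (ha : a ∈ genSet d F) : c • a ∈ genSet d F := by
  obtain ⟨n, g, q, hg, hq, rfl⟩ := ha
  refine ⟨n, fun i => c • g i, q, ?_, hq, ?_⟩
  · intro i
    exact (BA d).smul_mem (hg i) c
  · rw [Finset.smul_sum]
    exact Finset.sum_congr rfl fun i _ => (smul_mul_assoc c (g i) (q i)).symm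

lemma sum_mem_genSet (F : Finset C(CBall d, ℂ)) {ι : Type*} (s : Finset ι)
    (v : ι → C(CBall d, ℂ)) (hv : ∀ i ∈ s, v i ∈ genSet d F) :
    (∑ i ∈ s, v i) ∈ genSet d F :=
  Finset.sum_induction v (· ∈ genSet d F) (fun _ _ => add_mem_genSet d F)
    (zero_mem_genSet d F) hv

lemma genSet_subset_J {J : Set C(CBall d, ℂ)} (hJ : IsIdealOfBallAlg d J)
    (F : Finset C(CBall d, ℂ)) (hF : (F : Set C(CBall d, ℂ)) ⊆ J) :
    genSet d F ⊆ J := by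
  rintro h ⟨n, g, q, hg, hq, rfl⟩
  refine Finset.sum_induction _ (· ∈ J) (fun a b ha hb => hJ.2.2.1 a ha b hb) hJ.2.1
    fun i _ => hJ.2.2.2 _ (hF (hq i)) _ (hg i)

def idealJ (J : Set C(CBall d, ℂ)) (hJ : IsIdealOfBallAlg d J) :
    Ideal (MvPolynomial (Fin d) ℂ) where
  carrier := {p | polyMap d p ∈ J}
  add_mem' {a b} ha hb := by
    show polyMap d (a + b) ∈ J
    rw [map_add]
    exact hJ.2.2.1 _ ha _ hb
  zero_mem' := by
    show polyMap d 0 ∈ J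
    rw [map_zero]
    exact hJ.2.1
  smul_mem' c p hp := by
    show polyMap d (c * p) ∈ J
    rw [map_mul]
    exact hJ.2.2.2 _ hp _ (polyMap_mem_ballAlg d c)

local instance : DecidableEq C(CBall d, ℂ) := Classical.decEq _

lemma polyMap_span_mem_genSet
    (s : Finset (MvPolynomial (Fin d) ℂ)) {p : MvPolynomial (Fin d) ℂ}
    (hp : p ∈ Ideal.span (s : Set (MvPolynomial (Fin d) ℂ))) :
    polyMap d p ∈ genSet d (s.image (polyMap d)) := by
  obtain ⟨c, -, hc⟩ := Submodule.mem_span_finset.mp hp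
  rw [← hc, map_sum]
  refine sum_mem_genSet d _ s _ fun i hi => ?_
  rw [smul_eq_mul, map_mul]
  exact ⟨1, fun _ => polyMap d (c i), fun _ => polyMap d i,
    fun _ => polyMap_mem_ballAlg d _,
    fun _ => Finset.mem_coe.mpr (Finset.mem_image_of_mem _ hi), by simp⟩


lemma geom_bound {r : ℝ} (h0 : 0 ≤ r) (h1 : r < 1) (n : ℕ) :
    ∑ m ∈ Finset.range n, r ^ m ≤ 1 / (1 - r) := by
  have h := geom_sum_mul r n
  rw [le_div_iff₀ (by linarith)]
  nlinarith [pow_nonneg h0 n]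

lemma dilate_mem_closure_genSet {J : Set C(CBall d, ℂ)} (hJ : IsIdealOfBallAlg d J)
    (hJcl : IsClosed J) (hJhom : IsHomogBallIdeal d J)
    (s : Finset (MvPolynomial (Fin d) ℂ))
    (hspan : Ideal.span (s : Set (MvPolynomial (Fin d) ℂ)) = idealJ d J hJ)
    {f : C(CBall d, ℂ)} (hf : f ∈ J) (t : ℂ) (ht : ‖t‖ < 1) :
    dilateFn d t ht.le f ∈ closure (genSet d (s.image (polyMap d))) := by
  set F := s.image (polyMap d) with hF
  rw [Metric.mem_closure_iff]
  intro ε hε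
  have h1r : 0 < 1 - ‖t‖ := by linarith
  set δ := ε * (1 - ‖t‖) / 4 with hδ
  have hδpos : 0 < δ := by positivity
  have hfB : f ∈ ballAlg d := hJ.1 hf
  obtain ⟨b, ⟨p, rfl⟩, hbp⟩ := Metric.mem_closure_iff.mp hfB δ hδpos
  rw [dist_eq_norm] at hbp
  set N := p.totalDegree with hN
  have hfour : ∀ m : ℕ, four d m f ∈ genSet d F := by
    intro m
    obtain ⟨q, hqdeg, hq⟩ := four_mem_Wmod d hfB m
    rw [AlgHom.toLinearMap_apply] at hq
    have hqJ : q ∈ idealJ d J hJ := by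
      show polyMap d q ∈ J
      rw [hq]
      exact four_mem_J d hJ hJcl hJhom hf m
    rw [← hspan] at hqJ
    have h2 := polyMap_span_mem_genSet d s hqJ
    rwa [hq] at h2
  refine ⟨∑ m ∈ Finset.range (N+1), t ^ m • four d m f,
    sum_mem_genSet d F _ _ (fun m _ => smul_mem_genSet d F _ (hfour m)), ?_⟩
  rw [dist_eq_norm]
  have hdecomp : dilateFn d t ht.le f - ∑ m ∈ Finset.range (N+1), t ^ m • four d m f
      = dilateFn d t ht.le (f - polyMap d p)
        + ∑ m ∈ Finset.range (N+1), t ^ m • four d m (polyMap d p - f) := by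
    have h3 : ∑ m ∈ Finset.range (N+1), t ^ m • four d m (polyMap d p - f)
        = dilateFn d t ht.le (polyMap d p)
          - ∑ m ∈ Finset.range (N+1), t ^ m • four d m f := by
      rw [dilateFn_polyMap, ← Finset.sum_sub_distrib]
      refine Finset.sum_congr rfl fun m _ => ?_
      rw [four_sub, smul_sub, four_polyMap]
    rw [h3, dilateFn_sub]
    abel
  rw [hdecomp]
  have hb1 : ‖dilateFn d t ht.le (f - polyMap d p)‖ < δ :=
    lt_of_le_of_lt (norm_dilateFn_le d _ _ _) hbp
  have hb2 : ‖∑ m ∈ Finset.range (N+1), t ^ m • four d m (polyMap d p - f)‖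
      ≤ (1 / (1 - ‖t‖)) * δ := by
    calc ‖∑ m ∈ Finset.range (N+1), t ^ m • four d m (polyMap d p - f)‖
        ≤ ∑ m ∈ Finset.range (N+1), ‖t ^ m • four d m (polyMap d p - f)‖ :=
          norm_sum_le _ _
      _ ≤ ∑ m ∈ Finset.range (N+1), ‖t‖ ^ m * δ := by
          refine Finset.sum_le_sum fun m _ => ?_
          rw [norm_smul, norm_pow]
          refine mul_le_mul_of_nonneg_left ?_ (by positivity)
          refine le_trans (norm_four_le d m _) ?_
          rw [norm_sub_rev]
          exact hbp.le
      _ = (∑ m ∈ Finset.range (N+1), ‖t‖ ^ m) * δ := by rw [Finset.sum_mul]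
      _ ≤ (1 / (1 - ‖t‖)) * δ := by
          refine mul_le_mul_of_nonneg_right ?_ hδpos.le
          exact geom_bound (norm_nonneg t) ht _
  calc ‖dilateFn d t ht.le (f - polyMap d p)
        + ∑ m ∈ Finset.range (N+1), t ^ m • four d m (polyMap d p - f)‖
      ≤ ‖dilateFn d t ht.le (f - polyMap d p)‖
        + ‖∑ m ∈ Finset.range (N+1), t ^ m • four d m (polyMap d p - f)‖ := norm_add_le _ _
    _ < δ + (1 / (1 - ‖t‖)) * δ := by linarith
    _ ≤ ε := by
        rw [hδ]
        have hne : (1:ℝ) - ‖t‖ ≠ 0 := h1r.ne'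
        have e1 : 1 / (1 - ‖t‖) * (ε * (1 - ‖t‖) / 4) = ε / 4 := by
          have e2 : ε * (1 - ‖t‖) / 4 = (1 - ‖t‖) * (ε / 4) := by ring
          rw [e2, one_div, inv_mul_cancel_left₀ hne]
        rw [e1]
        nlinarith [norm_nonneg t]

end Stmt16Aux

open Stmt16Aux

/-- Every closed homogeneous ideal `J` of the ball algebra `B` is
finitely generated as a closed ideal: there is a finite set `F ⊆ J` such that `J`
is the closure of the (algebraic) ideal of `B` generated by `F`, i.e. of the set of
finite sums `Σ gᵢ·fᵢ` with `gᵢ ∈ B` and `fᵢ ∈ F`. -/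
theorem stmt16 (d : ℕ) (J : Set C(CBall d, ℂ))
    (hJ : IsIdealOfBallAlg d J) (hJcl : IsClosed J) (hJhom : IsHomogBallIdeal d J) :
    ∃ F : Finset C(CBall d, ℂ), (F : Set C(CBall d, ℂ)) ⊆ J ∧
      J = closure {h : C(CBall d, ℂ) |
        ∃ (n : ℕ) (g q : Fin n → C(CBall d, ℂ)),
          (∀ i, g i ∈ ballAlg d) ∧ (∀ i, q i ∈ (F : Set C(CBall d, ℂ))) ∧
          h = ∑ i, g i * q i} := by
  classical
  obtain ⟨s, hspan⟩ := IsNoetherian.noetherian (Stmt16Aux.idealJ d J hJ)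
  refine ⟨s.image (polyMap d), ?_, ?_⟩
  · intro x hx
    obtain ⟨p, hp, rfl⟩ := Finset.mem_image.mp (Finset.mem_coe.mp hx)
    have hpI : p ∈ idealJ d J hJ := by
      rw [← hspan]
      exact Ideal.subset_span (Finset.mem_coe.mpr hp)
    exact hpI
  · have hset : {h : C(CBall d, ℂ) |
        ∃ (n : ℕ) (g q : Fin n → C(CBall d, ℂ)),
          (∀ i, g i ∈ ballAlg d) ∧
          (∀ i, q i ∈ ((s.image (polyMap d) : Finset C(CBall d, ℂ)) : Set C(CBall d, ℂ))) ∧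
          h = ∑ i, g i * q i} = genSet d (s.image (polyMap d)) := rfl
    rw [hset]
    refine Set.Subset.antisymm ?_ ?_
    · intro f hf
      have h1 : ∀ t : ℂ, ∀ ht : ‖t‖ < 1,
          dilateFn d t ht.le f ∈ closure (genSet d (s.image (polyMap d))) :=
        fun t ht => dilate_mem_closure_genSet d hJ hJcl hJhom s hspan hf t ht
      have h2 := dilate_mem_of_closed' d isClosed_closure h1 1 norm_one.le
      rwa [dilateFn_one] at h2
    · have h3 : genSet d (s.image (polyMap d)) ⊆ J := by
        refine genSet_subset_J d hJ _ ?_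
        intro x hx
        obtain ⟨p, hp, rfl⟩ := Finset.mem_image.mp (Finset.mem_coe.mp hx)
        have hpI : p ∈ idealJ d J hJ := by
          rw [← hspan]
          exact Ideal.subset_span (Finset.mem_coe.mpr hp)
        exact hpI
      calc closure (genSet d (s.image (polyMap d))) ⊆ closure J := closure_mono h3
        _ = J := hJcl.closure_eq
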